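/- Let n, k, ℓ, δ be integers with 0 ≤ ℓ ≤ k, 0 ≤ δ ≤ k, and n ≥ 2k. Then Σ_{j=0}^{δ} [(−ℓ)_j (−δ)_j (ℓ−n−1)_j] / [(k−n)_j (−k)_j · j!] = (δ! / (k−n)_δ) · Σ_{j=0}^{δ} [(ℓ−k)_j (−δ)_j (n−k−ℓ+1)_j] / [(1)_j (−k)_j · j!], where both sides are rational numbers (all denominator factors being nonzero for the indices j with nonzero numerator). -/

import Mathlib

/-- The shifted factorial (Pochhammer symbol) `(a)_m = a(a+1)⋯(a+m−1)`, with `(a)_0 = 1`. -/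
noncomputable def poch (a : ℝ) (m : ℕ) : ℝ := (ascPochhammer ℝ m).eval a


section PochAux
open Finset

lemma poch_zero (a : ℝ) : poch a 0 = 1 := by simp [poch]

lemma poch_succ (a : ℝ) (m : ℕ) : poch a (m+1) = poch a m * (a + m) :=
  ascPochhammer_succ_eval m a

lemma poch_succ_left (a : ℝ) (m : ℕ) : poch a (m+1) = a * poch (a+1) m := by
  unfold poch
  rw [ascPochhammer_succ_left]
  simp [Polynomial.eval_comp]

lemma poch_add (a : ℝ) (m k : ℕ) : poch a m * poch (a + m) k = poch a (m + k) := by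
  have h := congrArg (Polynomial.eval a) (ascPochhammer_mul (S := ℝ) m k)
  simpa [poch, Polynomial.eval_comp] using h

lemma poch_ne_zero (a : ℝ) (m : ℕ) (h : ∀ t : ℕ, t < m → a + t ≠ 0) : poch a m ≠ 0 := by
  induction m with
  | zero => simp [poch_zero]
  | succ m ih =>
    rw [poch_succ]
    exact mul_ne_zero (ih fun t ht => h t (by omega)) (h m (by omega))

lemma poch_one (m : ℕ) : poch 1 m = m.factorial := by
  simpa [poch] using ascPochhammer_eval_one ℝ m

lemma poch_neg_nat (d j : ℕ) :
    poch (-(d:ℝ)) j = (-1:ℝ)^j * (d.choose j) * (j.factorial) := by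
  induction j with
  | zero => simp [poch_zero]
  | succ j ih =>
    rw [poch_succ, ih]
    rcases lt_or_ge j d with h | h
    · have key : (d.choose (j+1) : ℝ) * (j+1) = (d.choose j : ℝ) * ((d:ℝ) - j) := by
        have h2 := Nat.choose_succ_right_eq d j
        have h3 : ((d.choose (j+1) * (j+1) : ℕ) : ℝ) = ((d.choose j * (d - j) : ℕ) : ℝ) := by
          exact_mod_cast congrArg (Nat.cast (R := ℝ)) h2
        push_cast [Nat.cast_sub h.le] at h3
        linarith
      have hfac : ((j+1).factorial : ℝ) = (j.factorial : ℝ) * (j+1) := by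
        rw [Nat.factorial_succ]; push_cast; ring
      rw [hfac, pow_succ]
      linear_combination ((-1:ℝ)^j * (j.factorial : ℝ)) * key
    · have h1 : d.choose (j+1) = 0 := Nat.choose_eq_zero_of_lt (by omega)
      rcases eq_or_lt_of_le h with rfl | h2
      · simp [h1]
      · have h0 : d.choose j = 0 := Nat.choose_eq_zero_of_lt h2
        simp [h0, h1]

lemma poch_neg_cancel (d i : ℕ) :
    (-1:ℝ)^i * poch (-(d:ℝ)) i = (d.choose i : ℝ) * (i.factorial : ℝ) := by
  rw [poch_neg_nat, ← mul_assoc, ← mul_assoc, ← mul_pow]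
  norm_num

noncomputable def gaux (j : ℕ) (x y : ℝ) (i : ℕ) : ℝ :=
  (-1)^i * (j.choose i) * poch x i * poch (y+i) (j+1-i)
noncomputable def baux (j : ℕ) (x y : ℝ) (i : ℕ) : ℝ :=
  (-1)^(i+1) * (j.choose i) * poch x (i+1) * poch ((y+1)+i) (j-i)

lemma pochV (j : ℕ) : ∀ x y : ℝ,
    ∑ i ∈ range (j+1), (-1:ℝ)^i * (j.choose i) * poch x i * poch (y+i) (j-i)
      = poch (y-x) j := by
  induction j with
  | zero => intro x y; simp [poch_zero]
  | succ j ih =>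
    intro x y
    have key : ∑ i ∈ range (j+2),
          (-1:ℝ)^i * ((j+1).choose i) * poch x i * poch (y+i) (j+1-i)
        = (y - x) * ∑ i ∈ range (j+1),
            (-1:ℝ)^i * (j.choose i) * poch x i * poch ((y+1)+i) (j-i) := by
      calc ∑ i ∈ range (j+2), (-1:ℝ)^i * ((j+1).choose i) * poch x i * poch (y+i) (j+1-i)
          = ∑ i ∈ range (j+1), (gaux j x y (i+1) + baux j x y i) + gaux j x y 0 := by
            rw [Finset.sum_range_succ'
              (fun i => (-1:ℝ)^i * ((j+1).choose i) * poch x i * poch (y+i) (j+1-i)) (j+1)]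
            congr 1
            · apply Finset.sum_congr rfl
              intro i hi
              unfold gaux baux
              have hcc : (((j+1).choose (i+1) : ℕ) : ℝ)
                  = (j.choose i : ℝ) + (j.choose (i+1) : ℝ) := by
                rw [Nat.choose_succ_succ]; push_cast; ring
              have hsub : j + 1 - (i+1) = j - i := by omega
              have harg : (y + ((i+1 : ℕ) : ℝ)) = (y+1) + (i : ℝ) := by push_cast; ring
              rw [hcc, hsub, harg]
              ring
            · unfold gaux; simp
        _ = (∑ i ∈ range (j+1), gaux j x y (i+1) + gaux j x y 0)
              + ∑ i ∈ range (j+1), baux j x y i := by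
            rw [Finset.sum_add_distrib]; ring
        _ = (∑ i ∈ range (j+2), gaux j x y i) + ∑ i ∈ range (j+1), baux j x y i := by
            rw [Finset.sum_range_succ' (gaux j x y) (j+1)]
        _ = (∑ i ∈ range (j+1), gaux j x y i) + ∑ i ∈ range (j+1), baux j x y i := by
            rw [Finset.sum_range_succ]
            unfold gaux; simp [Nat.choose_succ_self]
        _ = ∑ i ∈ range (j+1), (gaux j x y i + baux j x y i) :=
            (Finset.sum_add_distrib).symm
        _ = (y-x) * ∑ i ∈ range (j+1),
              (-1:ℝ)^i * (j.choose i) * poch x i * poch ((y+1)+i) (j-i) := by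
            rw [Finset.mul_sum]
            apply Finset.sum_congr rfl
            intro i hi
            have hi' : i < j + 1 := Finset.mem_range.mp hi
            unfold gaux baux
            rw [show j + 1 - i = (j-i)+1 by omega, poch_succ_left, poch_succ,
              show (y+1) + (i:ℝ) = (y + (i:ℝ)) + 1 by ring, pow_succ]
            ring
    rw [key, ih x (y+1), show y + 1 - x = (y - x) + 1 by ring, ← poch_succ_left]

noncomputable def Taux (d : ℕ) (a b c e : ℝ) (i j : ℕ) : ℝ :=
  (-1)^j * (-1)^i * (d.choose j) * (j.choose i) * poch a j * poch (c-b) i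
    * poch (c+i) (j-i) * poch (c+j) (d-j) * poch (e+j) (d-j)

lemma dagger (d : ℕ) (a b c e : ℝ) :
    ∑ j ∈ range (d+1), (-1:ℝ)^j * (d.choose j) * poch a j * poch b j
        * poch (c+j) (d-j) * poch (e+j) (d-j)
      = ∑ i ∈ range (d+1), (d.choose i : ℝ) * poch a i * poch (c-b) i
          * poch (e-a) (d-i) * poch (c+i) (d-i) := by
  have hb : ∀ j : ℕ, poch b j
      = ∑ i ∈ range (j+1), (-1:ℝ)^i * (j.choose i) * poch (c-b) i * poch (c+i) (j-i) := by
    intro j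
    have h := pochV j (c-b) c
    rw [show c - (c-b) = b by ring] at h
    exact h.symm
  calc ∑ j ∈ range (d+1), (-1:ℝ)^j * (d.choose j) * poch a j * poch b j
        * poch (c+j) (d-j) * poch (e+j) (d-j)
      = ∑ j ∈ range (d+1), ∑ i ∈ range (j+1), Taux d a b c e i j := by
        apply Finset.sum_congr rfl
        intro j hj
        rw [hb j, Finset.mul_sum, Finset.sum_mul, Finset.sum_mul]
        apply Finset.sum_congr rfl
        intro i hi
        unfold Taux
        ring
    _ = ∑ j ∈ range (d+1), ∑ i ∈ range (d+1), Taux d a b c e i j := by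
        apply Finset.sum_congr rfl
        intro j hj
        apply Finset.sum_subset
        · apply Finset.range_subset_range.mpr
          have := Finset.mem_range.mp hj
          omega
        · intro i hi hni
          have hji : j < i := by
            have h1 := Finset.mem_range.mp hi
            have h2 : ¬ i < j + 1 := fun hc => hni (Finset.mem_range.mpr hc)
            omega
          unfold Taux
          rw [Nat.choose_eq_zero_of_lt hji]
          simp
    _ = ∑ i ∈ range (d+1), ∑ j ∈ range (d+1), Taux d a b c e i j := Finset.sum_comm
    _ = ∑ i ∈ range (d+1), (d.choose i : ℝ) * poch a i * poch (c-b) i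
          * poch (e-a) (d-i) * poch (c+i) (d-i) := by
        apply Finset.sum_congr rfl
        intro i hi
        have hid : i ≤ d := by have := Finset.mem_range.mp hi; omega
        have h1 : ∑ j ∈ range (d+1), Taux d a b c e i j
            = ∑ j ∈ Ico i (d+1), Taux d a b c e i j := by
          symm
          apply Finset.sum_subset
          · intro j hj
            simp only [Finset.mem_Ico] at hj
            exact Finset.mem_range.mpr hj.2
          · intro j hj hnj
            have hji : j < i := by
              have h1 := Finset.mem_range.mp hj
              simp only [Finset.mem_Ico] at hnj
              omega
            unfold Taux
            rw [Nat.choose_eq_zero_of_lt hji]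
            simp
        rw [h1, Finset.sum_Ico_eq_sum_range,
          show d + 1 - i = (d-i)+1 by omega]
        have h2 : ∑ m ∈ range ((d-i)+1), Taux d a b c e i (i+m)
            = (d.choose i : ℝ) * poch a i * poch (c-b) i * poch (c+i) (d-i)
              * ∑ m ∈ range ((d-i)+1),
                  (-1:ℝ)^m * ((d-i).choose m) * poch (a+i) m
                    * poch ((e+i)+m) ((d-i)-m) := by
          rw [Finset.mul_sum]
          apply Finset.sum_congr rfl
          intro m hm
          have him : i + m ≤ d := by have := Finset.mem_range.mp hm; omega
          have hsign : (-1:ℝ)^(i+m) * (-1:ℝ)^i = (-1:ℝ)^m := by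
            rw [pow_add]
            have : (-1:ℝ)^i * (-1:ℝ)^i = 1 := by rw [← mul_pow]; norm_num
            calc (-1:ℝ)^i * (-1:ℝ)^m * (-1:ℝ)^i
                = ((-1:ℝ)^i * (-1:ℝ)^i) * (-1:ℝ)^m := by ring
              _ = (-1:ℝ)^m := by rw [this, one_mul]
          have hch : (d.choose (i+m) : ℝ) * ((i+m).choose i : ℝ)
              = (d.choose i : ℝ) * ((d-i).choose m : ℝ) := by
            have h := Nat.choose_mul (n := d) (Nat.le_add_right i m)
            rw [show i + m - i = m by omega] at h
            exact_mod_cast congrArg (Nat.cast (R := ℝ)) h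
          have hpc2 : poch (c+(i:ℝ)) m * poch ((c+(i:ℝ))+(m:ℝ)) ((d-i)-m)
              = poch (c+(i:ℝ)) (d-i) := by
            rw [poch_add]
            congr 1
            omega
          unfold Taux
          rw [show (i+m) - i = m by omega]
          rw [show d - (i+m) = (d-i) - m by omega]
          rw [show c + ((i+m:ℕ):ℝ) = (c + (i:ℝ)) + (m:ℝ) by push_cast; ring]
          rw [show e + ((i+m:ℕ):ℝ) = (e + (i:ℝ)) + (m:ℝ) by push_cast; ring]
          rw [show poch a (i+m) = poch a i * poch (a+(i:ℝ)) m from (poch_add a i m).symm]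
          rw [← hpc2]
          linear_combination
            (poch a i * poch (a+(i:ℝ)) m * poch (c-b) i * poch (c+(i:ℝ)) m
              * poch ((c+(i:ℝ))+(m:ℝ)) ((d-i)-m) * poch ((e+(i:ℝ))+(m:ℝ)) ((d-i)-m)
              * (d.choose (i+m) : ℝ) * ((i+m).choose i : ℝ)) * hsign
            + (poch a i * poch (a+(i:ℝ)) m * poch (c-b) i * poch (c+(i:ℝ)) m
              * poch ((c+(i:ℝ))+(m:ℝ)) ((d-i)-m) * poch ((e+(i:ℝ))+(m:ℝ)) ((d-i)-m)
              * (-1:ℝ)^m) * hch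
        rw [h2, pochV (d-i) (a+i) (e+i),
          show (e+(i:ℝ)) - (a+(i:ℝ)) = e - a by ring]
        ring

lemma step (d : ℕ) (a b c e : ℝ) (hc : ∀ i : ℕ, i < d → c + i ≠ 0)
    (he : ∀ i : ℕ, i < d → e + i ≠ 0) :
    ∑ j ∈ range (d+1), poch (-(d:ℝ)) j * poch a j * poch b j
        / (poch c j * poch e j * j.factorial)
      = ∑ i ∈ range (d+1), (-1:ℝ)^i * poch (-(d:ℝ)) i * poch a i * poch (c-b) i
          * poch (e-a) (d-i) / (poch c i * i.factorial * poch e d) := by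
  have hcj : ∀ jj : ℕ, jj ≤ d → poch c jj ≠ 0 :=
    fun jj hjj => poch_ne_zero _ _ (fun t ht => hc t (by omega))
  have hej : ∀ jj : ℕ, jj ≤ d → poch e jj ≠ 0 :=
    fun jj hjj => poch_ne_zero _ _ (fun t ht => he t (by omega))
  have hM : poch c d * poch e d ≠ 0 := mul_ne_zero (hcj d le_rfl) (hej d le_rfl)
  apply mul_right_cancel₀ hM
  rw [Finset.sum_mul, Finset.sum_mul]
  have hL : ∑ j ∈ range (d+1), (poch (-(d:ℝ)) j * poch a j * poch b j
        / (poch c j * poch e j * j.factorial)) * (poch c d * poch e d)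
      = ∑ j ∈ range (d+1), (-1:ℝ)^j * (d.choose j) * poch a j * poch b j
          * poch (c+j) (d-j) * poch (e+j) (d-j) := by
    apply Finset.sum_congr rfl
    intro j hj
    have hjd : j ≤ d := by have := Finset.mem_range.mp hj; omega
    have h1 : poch c j * poch (c+(j:ℝ)) (d-j) = poch c d := by
      rw [poch_add]; congr 1; omega
    have h2 : poch e j * poch (e+(j:ℝ)) (d-j) = poch e d := by
      rw [poch_add]; congr 1; omega
    rw [poch_neg_nat, ← h1, ← h2]
    have hf : (j.factorial : ℝ) ≠ 0 := by exact_mod_cast j.factorial_ne_zero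
    field_simp [hcj j hjd, hej j hjd]
  have hR : ∑ i ∈ range (d+1), ((-1:ℝ)^i * poch (-(d:ℝ)) i * poch a i * poch (c-b) i
        * poch (e-a) (d-i) / (poch c i * i.factorial * poch e d)) * (poch c d * poch e d)
      = ∑ i ∈ range (d+1), (d.choose i : ℝ) * poch a i * poch (c-b) i
          * poch (e-a) (d-i) * poch (c+i) (d-i) := by
    apply Finset.sum_congr rfl
    intro i hi
    have hid : i ≤ d := by have := Finset.mem_range.mp hi; omega
    have h1 : poch c i * poch (c+(i:ℝ)) (d-i) = poch c d := by
      rw [poch_add]; congr 1; omega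
    have hf : (i.factorial : ℝ) ≠ 0 := by exact_mod_cast i.factorial_ne_zero
    have hneg : (-1:ℝ)^i * poch (-(d:ℝ)) i = (d.choose i : ℝ) * (i.factorial : ℝ) := by
      rw [poch_neg_nat, ← mul_assoc, ← mul_assoc, ← mul_pow]
      norm_num
    rw [← h1]
    calc (-1:ℝ)^i * poch (-(d:ℝ)) i * poch a i * poch (c-b) i
          * poch (e-a) (d-i) / (poch c i * i.factorial * poch e d)
          * ((poch c i * poch (c+(i:ℝ)) (d-i)) * poch e d)
        = ((-1:ℝ)^i * poch (-(d:ℝ)) i) * poch a i * poch (c-b) i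
          * poch (e-a) (d-i) / (poch c i * i.factorial * poch e d)
          * ((poch c i * poch (c+(i:ℝ)) (d-i)) * poch e d) := by ring
      _ = (d.choose i : ℝ) * poch a i * poch (c-b) i
          * poch (e-a) (d-i) * poch (c+i) (d-i) := by
          rw [hneg]
          field_simp [hcj i hid, hej d le_rfl]
  rw [hL, hR, dagger]

theorem stmt13 (n k ℓ δ : ℕ) (hℓ : ℓ ≤ k) (hδ : δ ≤ k) (hn : 2 * k ≤ n) :
    ∑ j ∈ Finset.range (δ + 1),
        poch (-(ℓ : ℝ)) j * poch (-(δ : ℝ)) j * poch ((ℓ : ℝ) - n - 1) j /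
          (poch ((k : ℝ) - n) j * poch (-(k : ℝ)) j * (j.factorial : ℝ))
      = ((δ.factorial : ℝ) / poch ((k : ℝ) - n) δ) *
          ∑ j ∈ Finset.range (δ + 1),
            poch ((ℓ : ℝ) - k) j * poch (-(δ : ℝ)) j * poch ((n : ℝ) - k - ℓ + 1) j /
              (poch 1 j * poch (-(k : ℝ)) j * (j.factorial : ℝ)) := by
  have hc1 : ∀ i : ℕ, i < δ → (-(k:ℝ)) + i ≠ 0 := by
    intro i hi
    have h : (i:ℝ) < (k:ℝ) := by exact_mod_cast lt_of_lt_of_le hi hδ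
    intro hq; linarith
  have he1 : ∀ i : ℕ, i < δ → ((k:ℝ) - n) + i ≠ 0 := by
    intro i hi
    have h : i + k < n := by omega
    have h' : (i:ℝ) + (k:ℝ) < (n:ℝ) := by exact_mod_cast h
    intro hq; linarith
  have he2 : ∀ i : ℕ, i < δ → (1:ℝ) + i ≠ 0 := by
    intro i hi
    have h : (0:ℝ) ≤ (i:ℝ) := Nat.cast_nonneg i
    intro hq; linarith
  have hP : poch ((k:ℝ) - n) δ ≠ 0 := poch_ne_zero _ _ he1
  have hdf : (δ.factorial : ℝ) ≠ 0 := by exact_mod_cast δ.factorial_ne_zero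
  calc ∑ j ∈ Finset.range (δ + 1),
        poch (-(ℓ : ℝ)) j * poch (-(δ : ℝ)) j * poch ((ℓ : ℝ) - n - 1) j /
          (poch ((k : ℝ) - n) j * poch (-(k : ℝ)) j * (j.factorial : ℝ))
      = ∑ j ∈ Finset.range (δ + 1),
          poch (-(δ:ℝ)) j * poch ((ℓ:ℝ)-n-1) j * poch (-(ℓ:ℝ)) j
            / (poch (-(k:ℝ)) j * poch ((k:ℝ)-n) j * j.factorial) := by
        apply Finset.sum_congr rfl
        intro j hj
        ring
    _ = ∑ i ∈ Finset.range (δ + 1),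
          (-1:ℝ)^i * poch (-(δ:ℝ)) i * poch ((ℓ:ℝ)-n-1) i
            * poch ((-(k:ℝ)) - (-(ℓ:ℝ))) i * poch (((k:ℝ)-n) - ((ℓ:ℝ)-n-1)) (δ-i)
            / (poch (-(k:ℝ)) i * i.factorial * poch ((k:ℝ)-n) δ) :=
        step δ ((ℓ:ℝ)-n-1) (-(ℓ:ℝ)) (-(k:ℝ)) ((k:ℝ)-n) hc1 he1
    _ = ∑ i ∈ Finset.range (δ + 1),
          (-1:ℝ)^i * poch (-(δ:ℝ)) i * poch ((ℓ:ℝ)-n-1) i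
            * poch ((ℓ:ℝ)-k) i * poch ((k:ℝ)-ℓ+1) (δ-i)
            / (poch (-(k:ℝ)) i * i.factorial * poch ((k:ℝ)-n) δ) := by
        rw [show (-(k:ℝ)) - (-(ℓ:ℝ)) = (ℓ:ℝ)-k by ring,
          show ((k:ℝ)-n) - ((ℓ:ℝ)-n-1) = (k:ℝ)-ℓ+1 by ring]
    _ = ((δ.factorial : ℝ) / poch ((k : ℝ) - n) δ) *
          ∑ i ∈ Finset.range (δ + 1),
            (-1:ℝ)^i * poch (-(δ:ℝ)) i * poch ((ℓ:ℝ)-k) i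
              * poch ((-(k:ℝ)) - ((n:ℝ)-k-ℓ+1)) i * poch ((1:ℝ) - ((ℓ:ℝ)-k)) (δ-i)
              / (poch (-(k:ℝ)) i * i.factorial * poch 1 δ) := by
        rw [Finset.mul_sum]
        apply Finset.sum_congr rfl
        intro i hi
        rw [show (-(k:ℝ)) - ((n:ℝ)-k-ℓ+1) = (ℓ:ℝ)-n-1 by ring,
          show (1:ℝ) - ((ℓ:ℝ)-k) = (k:ℝ)-ℓ+1 by ring, poch_one]
        have hid : i ≤ δ := by have := Finset.mem_range.mp hi; omega
        have hki : poch (-(k:ℝ)) i ≠ 0 := poch_ne_zero _ _ (fun t ht => hc1 t (by omega))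
        have hf : (i.factorial : ℝ) ≠ 0 := by exact_mod_cast i.factorial_ne_zero
        field_simp
    _ = ((δ.factorial : ℝ) / poch ((k : ℝ) - n) δ) *
          ∑ j ∈ Finset.range (δ + 1),
            poch (-(δ:ℝ)) j * poch ((ℓ:ℝ)-k) j * poch ((n:ℝ)-k-ℓ+1) j
              / (poch (-(k:ℝ)) j * poch 1 j * j.factorial) := by
        rw [step δ ((ℓ:ℝ)-k) ((n:ℝ)-k-ℓ+1) (-(k:ℝ)) 1 hc1 he2]
    _ = ((δ.factorial : ℝ) / poch ((k : ℝ) - n) δ) *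
          ∑ j ∈ Finset.range (δ + 1),
            poch ((ℓ : ℝ) - k) j * poch (-(δ : ℝ)) j * poch ((n : ℝ) - k - ℓ + 1) j /
              (poch 1 j * poch (-(k : ℝ)) j * (j.factorial : ℝ)) := by
        congr 1
        apply Finset.sum_congr rfl
        intro j hj
        ring

end PochAux
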